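/- arXiv:1007.5458 — 3 statements merged into one kernel-verified Lean document; each statement's English description precedes it below -/
import Mathlib

section
/- Let (V, d, ℓ_2, ℓ_3, ℓ_4) be as in the preceding correspondences (ℓ_2 a graded antisymmetric weight-0 chain map vanishing on V_1 × V_1 with associated bracket [−,−]; ℓ_3 : V_0^3 → V_1 antisymmetric trilinear satisfying the L-infinity condition n = 3, vanishing in total degree ≥ 1, with Jacobiator J_{xyz} = ([[x,y],z], ℓ_3(x,y,z)); ℓ_4 : V_0^4 → V_2 antisymmetric quadrilinear satisfying the L-infinity condition n = 4, with Identiator μ_{xyzu} = ([[[x,y],z],u], h_{xyzu}, −ℓ_4(x,y,z,u))). Then the coherence law α_1 + α_4^{-1} = α_3 + α_2^{-1} holds for all x,y,z,u,v ∈ V_0 if and only if the L-infinity condition n = 5 holds: for all x,y,z,u,v ∈ V_0, ℓ_2(ℓ_4(x,y,z,u),v) − ℓ_2(ℓ_4(x,y,z,v),u) + ℓ_2(ℓ_4(x,y,u,v),z) − ℓ_2(ℓ_4(x,z,u,v),y) + ℓ_2(ℓ_4(y,z,u,v),x) + ℓ_4(ℓ_2(x,y),z,u,v) − ℓ_4(ℓ_2(x,z),y,u,v)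 + ℓ_4(ℓ_2(x,u),y,z,v) − ℓ_4(ℓ_2(x,v),y,z,u) + ℓ_4(ℓ_2(y,z),x,u,v) − ℓ_4(ℓ_2(y,u),x,z,v) + ℓ_4(ℓ_2(y,v),x,z,u) + ℓ_4(ℓ_2(z,u),x,y,v) − ℓ_4(ℓ_2(z,v),x,y,u) + ℓ_4(ℓ_2(u,v),x,y,z) = 0. -/
/- The linear 2-category G(V) associated with a 3-term chain complex
   V₂ --d₂--> V₁ --d₁--> V₀ (d₁ ∘ d₂ = 0):
   L₀ = V₀, L₁ = V₀ × V₁, L₂ = V₀ × V₁ × V₂,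
   s(v₀,…,v_m) = (v₀,…,v_{m-1}), t(v₀,…,v_m) = (v₀,…,v_{m-1} + d v_m),
   1_{(v₀,…,v_m)} = (v₀,…,v_m,0),
   (v₀,…,v_m) ∘_p (w₀,…,w_m) = (v₀,…,v_p, v_{p+1}+w_{p+1}, …, v_m+w_m). -/

namespace GV

variable {K : Type} [Field K] {V0 V1 V2 : Type}
  [AddCommGroup V0] [AddCommGroup V1] [AddCommGroup V2]
  [Module K V0] [Module K V1] [Module K V2]

variable (d1 : V1 →ₗ[K] V0) (d2 : V2 →ₗ[K] V1)

/-- Source of a 1-cell. -/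
def s1 (v : V0 × V1) : V0 := v.1

/-- Target of a 1-cell. -/
def t1 (v : V0 × V1) : V0 := v.1 + d1 v.2

/-- Source of a 2-cell. -/
def s2 (v : V0 × V1 × V2) : V0 × V1 := (v.1, v.2.1)

/-- Target of a 2-cell. -/
def t2 (v : V0 × V1 × V2) : V0 × V1 := (v.1, v.2.1 + d2 v.2.2)

/-- Identity 1-cell on a 0-cell. -/
def one0 (x : V0) : V0 × V1 := (x, 0)

/-- Identity 2-cell on a 1-cell. -/
def one1 (v : V0 × V1) : V0 × V1 × V2 := (v.1, v.2, 0)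

/-- Composition of 1-cells along a 0-cell. -/
def comp01 (v w : V0 × V1) : V0 × V1 := (v.1, v.2 + w.2)

/-- Composition of 2-cells along a 0-cell. -/
def comp02 (v w : V0 × V1 × V2) : V0 × V1 × V2 := (v.1, v.2.1 + w.2.1, v.2.2 + w.2.2)

/-- Composition of 2-cells along a 1-cell. -/
def comp12 (v w : V0 × V1 × V2) : V0 × V1 × V2 := (v.1, v.2.1, v.2.2 + w.2.2)

/-- Composability of 1-cells along a 0-cell: `t v = s w`. -/
def Comp01 (v w : V0 × V1) : Prop := t1 d1 v = s1 w

/-- Composability of 2-cells along a 0-cell: `t² v = s² w`. -/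
def Comp02 (v w : V0 × V1 × V2) : Prop := t1 d1 (t2 d2 v) = s1 (s2 w)

/-- Composability of 2-cells along a 1-cell: `t v = s w`. -/
def Comp12 (v w : V0 × V1 × V2) : Prop := t2 d2 v = s2 w


/-- A graded antisymmetric chain map `ℓ₂` of weight 0 on `V = (V₀,V₁,V₂)` which
vanishes on `V₁ × V₁`. -/
structure Ell2 (K : Type) [Field K] (V0 V1 V2 : Type)
    [AddCommGroup V0] [AddCommGroup V1] [AddCommGroup V2]
    [Module K V0] [Module K V1] [Module K V2]
    (d1 : V1 →ₗ[K] V0) (d2 : V2 →ₗ[K] V1) : Type where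
  l00 : V0 → V0 → V0
  l01 : V0 → V1 → V1
  l10 : V1 → V0 → V1
  l02 : V0 → V2 → V2
  l20 : V2 → V0 → V2
  l11 : V1 → V1 → V2
  bil00 : (∀ x, IsLinearMap K (l00 x)) ∧ (∀ y, IsLinearMap K (fun x => l00 x y))
  bil01 : (∀ x, IsLinearMap K (l01 x)) ∧ (∀ g, IsLinearMap K (fun x => l01 x g))
  bil10 : (∀ f, IsLinearMap K (l10 f)) ∧ (∀ y, IsLinearMap K (fun f => l10 f y))
  bil02 : (∀ x, IsLinearMap K (l02 x)) ∧ (∀ b, IsLinearMap K (fun x => l02 x b))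
  bil20 : (∀ a, IsLinearMap K (l20 a)) ∧ (∀ y, IsLinearMap K (fun a => l20 a y))
  bil11 : (∀ f, IsLinearMap K (l11 f)) ∧ (∀ g, IsLinearMap K (fun f => l11 f g))
  anti00 : ∀ x y, l00 x y = -l00 y x
  anti10 : ∀ f y, l10 f y = -l01 y f
  anti20 : ∀ a y, l20 a y = -l02 y a
  anti11 : ∀ f g, l11 f g = l11 g f
  chain01 : ∀ x g, d1 (l01 x g) = l00 x (d1 g)
  chain10 : ∀ f y, d1 (l10 f y) = l00 (d1 f) y
  chain02 : ∀ x b, d2 (l02 x b) = l01 x (d2 b)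
  chain20 : ∀ a y, d2 (l20 a y) = l10 (d2 a) y
  chain11 : ∀ f g, d2 (l11 f g) = l01 (d1 f) g - l10 f (d1 g)
  chain12 : ∀ f b, (0 : V2) = l02 (d1 f) b - l11 f (d2 b)
  vanish11 : ∀ f g, l11 f g = 0


variable {d1} {d2} in
/-- The bracket of 1-cells associated with `ℓ₂`:
`[(x,f),(y,g)] = (ℓ₂(x,y), ℓ₂(x,g) + ℓ₂(f, y + d g))`. -/
def br1 (E : Ell2 K V0 V1 V2 d1 d2) (v w : V0 × V1) : V0 × V1 :=
  (E.l00 v.1 w.1, E.l01 v.1 w.2 + E.l10 v.2 (w.1 + d1 w.2))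

variable {d1} {d2} in
/-- The bracket of 2-cells associated with `ℓ₂`:
`[(x,f,a),(y,g,b)] = (ℓ₂(x,y), ℓ₂(x,g) + ℓ₂(f, y + d g), ℓ₂(x,b) + ℓ₂(a,y))`. -/
def br2 (E : Ell2 K V0 V1 V2 d1 d2) (v w : V0 × V1 × V2) : V0 × V1 × V2 :=
  (E.l00 v.1 w.1, E.l01 v.1 w.2.1 + E.l10 v.2.1 (w.1 + d1 w.2.1),
    E.l02 v.1 w.2.2 + E.l20 v.2.2 w.1)

end GV

namespace GV

variable {K : Type} [Field K] {V0 V1 V2 : Type}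
  [AddCommGroup V0] [AddCommGroup V1] [AddCommGroup V2]
  [Module K V0] [Module K V1] [Module K V2]
  {d1 : V1 →ₗ[K] V0} {d2 : V2 →ₗ[K] V1}

/-- An antisymmetric trilinear map `ℓ₃ : V₀³ → V₁` satisfying the L∞ condition `n = 3`
(for its weight-1 graded antisymmetric extension by zero in total degree ≥ 1). -/
structure Ell3 (E : Ell2 K V0 V1 V2 d1 d2) : Type where
  l3 : V0 → V0 → V0 → V1
  tri : (∀ x y, IsLinearMap K (l3 x y)) ∧
    (∀ x z, IsLinearMap K (fun y => l3 x y z)) ∧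
    (∀ y z, IsLinearMap K (fun x => l3 x y z))
  anti12 : ∀ x y z, l3 x y z = -l3 y x z
  anti23 : ∀ x y z, l3 x y z = -l3 x z y
  cond1 : ∀ x y z, d1 (l3 x y z) + E.l00 (E.l00 x y) z - E.l00 (E.l00 x z) y +
      E.l00 (E.l00 y z) x = 0
  cond2 : ∀ x y f, E.l01 (E.l00 x y) f - E.l10 (E.l01 x f) y + E.l10 (E.l01 y f) x +
      l3 (d1 f) x y = 0
  cond3 : ∀ x y a, E.l02 (E.l00 x y) a - E.l20 (E.l02 x a) y + E.l20 (E.l02 y a) x = 0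

/-- A Jacobiator: a skew-symmetric trilinear natural 2-transformation
`[[−,−],•] ⇒ [[−,•],−] + [−,[−,•]]`. -/
structure Jacobiator (E : Ell2 K V0 V1 V2 d1 d2) : Type where
  J : V0 → V0 → V0 → V0 × V1
  tri : (∀ x y, IsLinearMap K (J x y)) ∧
    (∀ x z, IsLinearMap K (fun y => J x y z)) ∧
    (∀ y z, IsLinearMap K (fun x => J x y z))
  src : ∀ x y z, (J x y z).1 = E.l00 (E.l00 x y) z
  tgt : ∀ x y z, t1 d1 (J x y z) = E.l00 (E.l00 x z) y + E.l00 x (E.l00 y z)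
  anti12 : ∀ x y z, (J x y z).2 = -(J y x z).2
  anti23 : ∀ x y z, (J x y z).2 = -(J x z y).2
  nat3 : ∀ (x y z : V0) (f : V1) (a : V2),
      comp02 (br2 E (br2 E (x, 0, 0) (y, 0, 0)) (z, f, a))
          (one1 (J x y (t1 d1 (t2 d2 (z, f, a))))) =
        comp02 (one1 (J x y z))
          (br2 E (br2 E (x, 0, 0) (z, f, a)) (y, 0, 0) +
            br2 E (x, 0, 0) (br2 E (y, 0, 0) (z, f, a)))
  nat1 : ∀ (x y z : V0) (f : V1) (a : V2),
      comp02 (br2 E (br2 E (x, f, a) (y, 0, 0)) (z, 0, 0))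
          (one1 (J (t1 d1 (t2 d2 (x, f, a))) y z)) =
        comp02 (one1 (J x y z))
          (br2 E (br2 E (x, f, a) (z, 0, 0)) (y, 0, 0) +
            br2 E (x, f, a) (br2 E (y, 0, 0) (z, 0, 0)))
  nat2 : ∀ (x y z : V0) (f : V1) (a : V2),
      comp02 (br2 E (br2 E (x, 0, 0) (y, f, a)) (z, 0, 0))
          (one1 (J x (t1 d1 (t2 d2 (y, f, a))) z)) =
        comp02 (one1 (J x y z))
          (br2 E (br2 E (x, 0, 0) (z, 0, 0)) (y, f, a) +
            br2 E (x, 0, 0) (br2 E (y, f, a) (z, 0, 0)))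

end GV

namespace GV

variable {K : Type} [Field K] {V0 V1 V2 : Type}
  [AddCommGroup V0] [AddCommGroup V1] [AddCommGroup V2]
  [Module K V0] [Module K V1] [Module K V2]
  {d1 : V1 →ₗ[K] V0} {d2 : V2 →ₗ[K] V1}

/-- The Jacobiator 1-cell associated with `ℓ₃`: `J_{xyz} = ([[x,y],z], ℓ₃(x,y,z))`. -/
def Jc (E : Ell2 K V0 V1 V2 d1 d2) (T : Ell3 E) (x y z : V0) : V0 × V1 :=
  (E.l00 (E.l00 x y) z, T.l3 x y z)

/-- The 1-cell
`η_{xyzu} = [J_{xyz},1_u] ∘₀ (J_{[x,z],y,u} + J_{x,[y,z],u}) ∘₀ ([J_{xzu},1_y] + 1)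
  ∘₀ ([1_x,J_{yzu}] + 1)`, the unlabelled identity 1-cells being determined by
composability. -/
def eta (E : Ell2 K V0 V1 V2 d1 d2) (T : Ell3 E) (x y z u : V0) : V0 × V1 :=
  let g1 := br1 E (Jc E T x y z) (one0 u)
  let g2 := Jc E T (E.l00 x z) y u + Jc E T x (E.l00 y z) u
  let N3 := br1 E (Jc E T x z u) (one0 y)
  let g3 := N3 + one0 (t1 d1 g2 - N3.1)
  let N4 := br1 E (one0 x) (Jc E T y z u)
  let g4 := N4 + one0 (t1 d1 g3 - N4.1)
  comp01 (comp01 (comp01 g1 g2) g3) g4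

/-- The 1-cell
`ε_{xyzu} = J_{[x,y],z,u} ∘₀ ([J_{xyu},1_z] + 1)
  ∘₀ (J_{x,[y,u],z} + J_{[x,u],y,z} + J_{x,y,[z,u]})`. -/
def eps (E : Ell2 K V0 V1 V2 d1 d2) (T : Ell3 E) (x y z u : V0) : V0 × V1 :=
  let g1 := Jc E T (E.l00 x y) z u
  let N2 := br1 E (Jc E T x y u) (one0 z)
  let g2 := N2 + one0 (t1 d1 g1 - N2.1)
  let g3 := Jc E T x (E.l00 y u) z + Jc E T (E.l00 x u) y z + Jc E T x y (E.l00 z u)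
  comp01 (comp01 g1 g2) g3

/-- The quadrilinear 2-functor `F`, `F(α,β,γ,δ) = [[[α,β],γ],δ]`, on 2-cells. -/
def Fq (E : Ell2 K V0 V1 V2 d1 d2) (a b c d : V0 × V1 × V2) : V0 × V1 × V2 :=
  br2 E (br2 E (br2 E a b) c) d

/-- The quadrilinear 2-functor `G`,
`G(α,β,γ,δ) = [α,[[β,δ],γ]] + [α,[β,[γ,δ]]] + [[[α,δ],γ],β] + [[α,[γ,δ]],β]
  + [[α,γ],[β,δ]] + [[α,δ],[β,γ]]`, on 2-cells. -/
def Gq (E : Ell2 K V0 V1 V2 d1 d2) (a b c d : V0 × V1 × V2) : V0 × V1 × V2 :=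
  br2 E a (br2 E (br2 E b d) c) + br2 E a (br2 E b (br2 E c d)) +
    br2 E (br2 E (br2 E a d) c) b + br2 E (br2 E a (br2 E c d)) b +
    br2 E (br2 E a c) (br2 E b d) + br2 E (br2 E a d) (br2 E b c)

/-- An antisymmetric quadrilinear map `ℓ₄ : V₀⁴ → V₂` satisfying the L∞ condition
`n = 4` (in the form `d ℓ₄(x,y,z,u) − h_{xyzu} + e_{xyzu} = 0`, `ℓ₄(d f,x,y,z) = 0`). -/
structure Ell4 (E : Ell2 K V0 V1 V2 d1 d2) (T : Ell3 E) : Type where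
  l4 : V0 → V0 → V0 → V0 → V2
  quad : (∀ x y z, IsLinearMap K (l4 x y z)) ∧
    (∀ x y u, IsLinearMap K (fun z => l4 x y z u)) ∧
    (∀ x z u, IsLinearMap K (fun y => l4 x y z u)) ∧
    (∀ y z u, IsLinearMap K (fun x => l4 x y z u))
  anti12 : ∀ x y z u, l4 x y z u = -l4 y x z u
  anti23 : ∀ x y z u, l4 x y z u = -l4 x z y u
  anti34 : ∀ x y z u, l4 x y z u = -l4 x y u z
  cond1 : ∀ x y z u,
      d2 (l4 x y z u) - (eta E T x y z u).2 + (eps E T x y z u).2 = 0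
  cond2 : ∀ (f : V1) (x y z : V0), l4 (d1 f) x y z = 0

/-- An Identiator: a skew-symmetric quadrilinear 2-modification `μ : η ⇛ ε`. -/
structure Identiator (E : Ell2 K V0 V1 V2 d1 d2) (T : Ell3 E) : Type where
  mu : V0 → V0 → V0 → V0 → V0 × V1 × V2
  quad : (∀ x y z, IsLinearMap K (mu x y z)) ∧
    (∀ x y u, IsLinearMap K (fun z => mu x y z u)) ∧
    (∀ x z u, IsLinearMap K (fun y => mu x y z u)) ∧
    (∀ y z u, IsLinearMap K (fun x => mu x y z u))
  src : ∀ x y z u, s2 (mu x y z u) = eta E T x y z u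
  tgt : ∀ x y z u, t2 d2 (mu x y z u) = eps E T x y z u
  anti12 : ∀ x y z u, (mu x y z u).2.2 = -(mu y x z u).2.2
  anti23 : ∀ x y z u, (mu x y z u).2.2 = -(mu x z y u).2.2
  anti34 : ∀ x y z u, (mu x y z u).2.2 = -(mu x y u z).2.2
  mod4 : ∀ (x y z u : V0) (f : V1) (a : V2),
      comp02 (Fq E (x, 0, 0) (y, 0, 0) (z, 0, 0) (u, f, a))
          (mu x y z (t1 d1 (t2 d2 (u, f, a)))) =
        comp02 (mu x y z u) (Gq E (x, 0, 0) (y, 0, 0) (z, 0, 0) (u, f, a))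
  mod3 : ∀ (x y z u : V0) (f : V1) (a : V2),
      comp02 (Fq E (x, 0, 0) (y, 0, 0) (z, f, a) (u, 0, 0))
          (mu x y (t1 d1 (t2 d2 (z, f, a))) u) =
        comp02 (mu x y z u) (Gq E (x, 0, 0) (y, 0, 0) (z, f, a) (u, 0, 0))
  mod2 : ∀ (x y z u : V0) (f : V1) (a : V2),
      comp02 (Fq E (x, 0, 0) (y, f, a) (z, 0, 0) (u, 0, 0))
          (mu x (t1 d1 (t2 d2 (y, f, a))) z u) =
        comp02 (mu x y z u) (Gq E (x, 0, 0) (y, f, a) (z, 0, 0) (u, 0, 0))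
  mod1 : ∀ (x y z u : V0) (f : V1) (a : V2),
      comp02 (Fq E (x, f, a) (y, 0, 0) (z, 0, 0) (u, 0, 0))
          (mu (t1 d1 (t2 d2 (x, f, a))) y z u) =
        comp02 (mu x y z u) (Gq E (x, f, a) (y, 0, 0) (z, 0, 0) (u, 0, 0))

end GV

namespace GV

variable {K : Type} [Field K] {V0 V1 V2 : Type}
  [AddCommGroup V0] [AddCommGroup V1] [AddCommGroup V2]
  [Module K V0] [Module K V1] [Module K V2]
  {d1 : V1 →ₗ[K] V0} {d2 : V2 →ₗ[K] V1}

/-- The squared target `t²` of a 2-cell. -/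
def tt2 (d1 : V1 →ₗ[K] V0) (d2 : V2 →ₗ[K] V1) (v : V0 × V1 × V2) : V0 :=
  t1 d1 (t2 d2 v)

/-- Pad a sum `N` of 2-cells by the identity 2-cell `1²_c` on the 0-cell `c`
determined by composability with the previous factor `prev`. -/
def pad2 (d1 : V1 →ₗ[K] V0) (d2 : V2 →ₗ[K] V1) (prev N : V0 × V1 × V2) :
    V0 × V1 × V2 :=
  N + (tt2 d1 d2 prev - N.1, 0, 0)

/-- The inverse `α⁻¹ = (A, r + d a, −a)` of a 2-cell `α = (A, r, a)` for `∘₁`. -/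
def inv2 (d2 : V2 →ₗ[K] V1) (a : V0 × V1 × V2) : V0 × V1 × V2 :=
  (a.1, a.2.1 + d2 a.2.2, -a.2.2)

/-- The Identiator 2-cell associated with `ℓ₄`:
`μ_{xyzu} = ([[[x,y],z],u], h_{xyzu}, −ℓ₄(x,y,z,u))`. -/
def muc (E : Ell2 K V0 V1 V2 d1 d2) (T : Ell3 E) (Q : Ell4 E T) (x y z u : V0) :
    V0 × V1 × V2 :=
  ((eta E T x y z u).1, (eta E T x y z u).2, -Q.l4 x y z u)

/-- The 2-cell `α₁`. -/
def alpha1 (E : Ell2 K V0 V1 V2 d1 d2) (T : Ell3 E) (Q : Ell4 E T)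
    (x y z u v : V0) : V0 × V1 × V2 :=
  let f1 := one1 (Jc E T (E.l00 (E.l00 x y) z) u v)
  let f2 := muc E T Q x y z (E.l00 u v) + br2 E (muc E T Q x y z v) (one1 (one0 u))
  let N3 := one1 (br1 E (Jc E T x (E.l00 z v) y) (one0 u) +
    br1 E (Jc E T (E.l00 x v) z y) (one0 u) + br1 E (Jc E T x z (E.l00 y v)) (one0 u))
  let f3 := pad2 d1 d2 f2 N3
  let N4 := muc E T Q (E.l00 x v) y z u + muc E T Q x (E.l00 y v) z u +
    muc E T Q x y (E.l00 z v) u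
  let f4 := pad2 d1 d2 f3 N4
  comp02 (comp02 (comp02 f1 f2) f3) f4

/-- The 2-cell `α₄`. -/
def alpha4 (E : Ell2 K V0 V1 V2 d1 d2) (T : Ell3 E) (Q : Ell4 E T)
    (x y z u v : V0) : V0 × V1 × V2 :=
  let f1 := br2 E (muc E T Q x y z u) (one1 (one0 v))
  let N2 := one1 (br1 E (Jc E T (E.l00 x u) z y) (one0 v) +
    br1 E (Jc E T x z (E.l00 y u)) (one0 v) + br1 E (Jc E T x (E.l00 z u) y) (one0 v))
  let f2 := pad2 d1 d2 f1 N2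
  let f3 := muc E T Q (E.l00 x u) y z v + muc E T Q x (E.l00 y u) z v +
    muc E T Q x y (E.l00 z u) v
  let N4 := one1 (br1 E (br1 E (Jc E T x u v) (one0 z)) (one0 y) +
    br1 E (Jc E T x u v) (one0 (E.l00 y z)) +
    br1 E (one0 x) (br1 E (Jc E T y u v) (one0 z)) +
    br1 E (br1 E (one0 x) (Jc E T z u v)) (one0 y) +
    br1 E (one0 x) (br1 E (one0 y) (Jc E T z u v)) +
    br1 E (one0 (E.l00 x z)) (Jc E T y u v))
  let f4 := pad2 d1 d2 f3 N4
  comp02 (comp02 (comp02 f1 f2) f3) f4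

/-- The 2-cell `α₃`. -/
def alpha3 (E : Ell2 K V0 V1 V2 d1 d2) (T : Ell3 E) (Q : Ell4 E T)
    (x y z u v : V0) : V0 × V1 × V2 :=
  let f1 := muc E T Q (E.l00 x y) z u v
  let N2 := one1 (br1 E (Jc E T (E.l00 x y) v u) (one0 z))
  let f2 := pad2 d1 d2 f1 N2
  let N3 := br2 E (muc E T Q x y u v) (one1 (one0 z))
  let f3 := pad2 d1 d2 f2 N3
  let f4 := one1 (br1 E (Jc E T x y v) (one0 (E.l00 z u)) +
    Jc E T x y (E.l00 (E.l00 z v) u) + Jc E T x y (E.l00 z (E.l00 u v)) +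
    Jc E T (E.l00 (E.l00 x v) u) y z + Jc E T (E.l00 x v) (E.l00 y u) z +
    Jc E T (E.l00 x u) (E.l00 y v) z + Jc E T x (E.l00 (E.l00 y v) u) z +
    Jc E T (E.l00 x (E.l00 u v)) y z + Jc E T x (E.l00 y (E.l00 u v)) z +
    br1 E (Jc E T x y u) (one0 (E.l00 z v)))
  let N5 := one1 (Jc E T x (E.l00 y v) (E.l00 z u) +
    Jc E T (E.l00 x v) y (E.l00 z u) + Jc E T x (E.l00 y u) (E.l00 z v) +
    Jc E T (E.l00 x u) y (E.l00 z v))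
  let f5 := pad2 d1 d2 f4 N5
  comp02 (comp02 (comp02 (comp02 f1 f2) f3) f4) f5

/-- The 2-cell `α₂`. -/
def alpha2 (E : Ell2 K V0 V1 V2 d1 d2) (T : Ell3 E) (Q : Ell4 E T)
    (x y z u v : V0) : V0 × V1 × V2 :=
  let f1 := one1 (br1 E (br1 E (Jc E T x y z) (one0 u)) (one0 v))
  let f2 := muc E T Q (E.l00 x z) y u v + muc E T Q x (E.l00 y z) u v
  let N3 := one1 (br1 E (one0 x) (Jc E T (E.l00 y z) v u) +
    br1 E (Jc E T (E.l00 x z) v u) (one0 y))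
  let f3 := pad2 d1 d2 f2 N3
  let N4 := br2 E (one1 (one0 x)) (muc E T Q y z u v) +
    br2 E (muc E T Q x z u v) (one1 (one0 y))
  let f4 := pad2 d1 d2 f3 N4
  let N5 := one1 (br1 E (Jc E T x z v) (one0 (E.l00 y u)) +
    br1 E (Jc E T x z u) (one0 (E.l00 y v)) +
    br1 E (one0 (E.l00 x v)) (Jc E T y z u) +
    br1 E (one0 (E.l00 x u)) (Jc E T y z v))
  let f5 := pad2 d1 d2 f4 N5
  comp02 (comp02 (comp02 (comp02 f1 f2) f3) f4) f5

end GV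


namespace GV

variable {K : Type} [Field K] {V0 V1 V2 : Type}
  [AddCommGroup V0] [AddCommGroup V1] [AddCommGroup V2]
  [Module K V0] [Module K V1] [Module K V2]
  {d1 : V1 →ₗ[K] V0} {d2 : V2 →ₗ[K] V1}

section Helpers
variable (E : Ell2 K V0 V1 V2 d1 d2) (T : Ell3 E) (Q : Ell4 E T)

lemma eq_of_rel {α : Type} [AddCommGroup α] {a b c : α} (h : c = 0) (h2 : a = c + b) :
    a = b := by rw [h, zero_add] at h2; exact h2

lemma l01_addr (x : V0) (f g : V1) : E.l01 x (f + g) = E.l01 x f + E.l01 x g :=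
  (E.bil01.1 x).map_add f g

lemma l01_zeror (x : V0) : E.l01 x (0 : V1) = 0 := (E.bil01.1 x).map_zero
lemma l01_negr (x : V0) (f : V1) : E.l01 x (-f) = -E.l01 x f := (E.bil01.1 x).map_neg f
lemma l01_zerol (f : V1) : E.l01 (0 : V0) f = 0 := (E.bil01.2 f).map_zero
lemma l01_negl (x : V0) (f : V1) : E.l01 (-x) f = -E.l01 x f := (E.bil01.2 f).map_neg x
lemma l10_zerol (y : V0) : E.l10 (0 : V1) y = 0 := (E.bil10.2 y).map_zero
lemma l10_addl (f g : V1) (y : V0) : E.l10 (f + g) y = E.l10 f y + E.l10 g y :=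
  (E.bil10.2 y).map_add f g
lemma l10_negl (f : V1) (y : V0) : E.l10 (-f) y = -E.l10 f y := (E.bil10.2 y).map_neg f

lemma l02_zeror (x : V0) : E.l02 x (0 : V2) = 0 := (E.bil02.1 x).map_zero
lemma l02_negr (x : V0) (a : V2) : E.l02 x (-a) = -E.l02 x a := (E.bil02.1 x).map_neg a
lemma l02_negl (x : V0) (a : V2) : E.l02 (-x) a = -E.l02 x a := (E.bil02.2 a).map_neg x
lemma l02_addr (x : V0) (a b : V2) : E.l02 x (a + b) = E.l02 x a + E.l02 x b :=
  (E.bil02.1 x).map_add a b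

lemma l20_zerol (y : V0) : E.l20 (0 : V2) y = 0 := (E.bil20.2 y).map_zero
lemma l20_addl (a b : V2) (y : V0) : E.l20 (a + b) y = E.l20 a y + E.l20 b y :=
  (E.bil20.2 y).map_add a b
lemma l20_negl (a : V2) (y : V0) : E.l20 (-a) y = -E.l20 a y := (E.bil20.2 y).map_neg a
lemma l00_negl (a b : V0) : E.l00 (-a) b = -E.l00 a b := (E.bil00.2 b).map_neg a
lemma l00_negr (a b : V0) : E.l00 a (-b) = -E.l00 a b := (E.bil00.1 a).map_neg b
lemma l3_addl (a b p q : V0) : T.l3 (a + b) p q = T.l3 a p q + T.l3 b p q :=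
  (T.tri.2.2 p q).map_add a b
lemma l3_negl (a p q : V0) : T.l3 (-a) p q = -T.l3 a p q := (T.tri.2.2 p q).map_neg a

lemma l3_neg2 (a p q : V0) : T.l3 a (-p) q = -T.l3 a p q := (T.tri.2.1 a q).map_neg p
lemma l3_neg3 (a p q : V0) : T.l3 a p (-q) = -T.l3 a p q := (T.tri.1 a p).map_neg q
lemma l4_neg1 (a p q r : V0) : Q.l4 (-a) p q r = -Q.l4 a p q r :=
  (Q.quad.2.2.2 p q r).map_neg a
lemma l4_neg2 (a p q r : V0) : Q.l4 a (-p) q r = -Q.l4 a p q r :=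
  (Q.quad.2.2.1 a q r).map_neg p
lemma l4_neg3 (a p q r : V0) : Q.l4 a p (-q) r = -Q.l4 a p q r :=
  (Q.quad.2.1 a p r).map_neg q
lemma l4_neg4 (a p q r : V0) : Q.l4 a p q (-r) = -Q.l4 a p q r :=
  (Q.quad.1 a p q).map_neg r

lemma l01_subr (x : V0) (f g : V1) : E.l01 x (f - g) = E.l01 x f - E.l01 x g :=
  by rw [sub_eq_add_neg, l01_addr, l01_negr, sub_eq_add_neg]

lemma l10_subl (f g : V1) (y : V0) : E.l10 (f - g) y = E.l10 f y - E.l10 g y :=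
  by rw [sub_eq_add_neg, l10_addl, l10_negl, sub_eq_add_neg]

lemma l02_subr (x : V0) (a b : V2) : E.l02 x (a - b) = E.l02 x a - E.l02 x b :=
  by rw [sub_eq_add_neg, l02_addr, l02_negr, sub_eq_add_neg]

lemma l3_subl (a b p q : V0) : T.l3 (a - b) p q = T.l3 a p q - T.l3 b p q :=
  by rw [sub_eq_add_neg, l3_addl, l3_negl, sub_eq_add_neg]

-- permutation lemmas for l3
lemma l3_213 (a b c : V0) : T.l3 b a c = -T.l3 a b c := T.anti12 b a c
lemma l3_132 (a b c : V0) : T.l3 a c b = -T.l3 a b c := T.anti23 a c b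
lemma l3_321 (a b c : V0) : T.l3 c b a = -T.l3 a b c := by
  rw [T.anti12 c b a, T.anti23 b c a, T.anti12 b a c]; abel
lemma l3_231 (a b c : V0) : T.l3 b c a = T.l3 a b c := by
  rw [T.anti12 b c a, T.anti23 c b a, T.anti12 c a b, T.anti23 a c b]; abel
lemma l3_312 (a b c : V0) : T.l3 c a b = T.l3 a b c := by
  rw [T.anti12 c a b, T.anti23 a c b]; abel

lemma d1_l3 (p q r : V0) :
    d1 (T.l3 p q r) =
      -E.l00 (E.l00 p q) r + E.l00 (E.l00 p r) q - E.l00 (E.l00 q r) p :=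
  eq_of_rel (T.cond1 p q r) (by abel)

lemma d2_l4 (a b c d : V0) :
    d2 (Q.l4 a b c d) = (eta E T a b c d).2 - (eps E T a b c d).2 :=
  eq_of_rel (Q.cond1 a b c d) (by abel)

end Helpers
end GV

namespace GV
variable {K : Type} [Field K] {V0 V1 V2 : Type}
  [AddCommGroup V0] [AddCommGroup V1] [AddCommGroup V2]
  [Module K V0] [Module K V1] [Module K V2]
  {d1 : V1 →ₗ[K] V0} {d2 : V2 →ₗ[K] V1}
section Helpers2
variable (E : Ell2 K V0 V1 V2 d1 d2) (T : Ell3 E) (Q : Ell4 E T)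

lemma nz {α : Type} [AddCommGroup α] {c : α} (h : c = 0) : -c = 0 := by rw [h, neg_zero]

lemma eq_of_rel7 {α : Type} [AddCommGroup α] {a b c1 c2 c3 c4 c5 c6 c7 : α}
    (h1 : c1 = 0) (h2 : c2 = 0) (h3 : c3 = 0) (h4 : c4 = 0) (h5 : c5 = 0)
    (h6 : c6 = 0) (h7 : c7 = 0)
    (h : a = c1 + c2 + c3 + c4 + c5 + c6 + c7 + b) : a = b := by
  rw [h1, h2, h3, h4, h5, h6, h7] at h; rw [h]; abel

lemma l4_2134 (a b c d : V0) : Q.l4 b a c d = -Q.l4 a b c d := Q.anti12 b a c d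
lemma l4_1324 (a b c d : V0) : Q.l4 a c b d = -Q.l4 a b c d := Q.anti23 a c b d
lemma l4_1243 (a b c d : V0) : Q.l4 a b d c = -Q.l4 a b c d := Q.anti34 a b d c
lemma l4_3124 (a b c d : V0) : Q.l4 b c a d = Q.l4 a b c d := by
  rw [Q.anti12 b c a d, Q.anti23 c b a d, Q.anti12 c a b d, Q.anti23 a c b d]; abel
lemma l4_4123 (a b c d : V0) : Q.l4 b c d a = -Q.l4 a b c d := by
  rw [Q.anti34 b c d a, l4_3124 E T Q a b c d]  -- l4 b c d a = -(l4 b c a d) = -(l4 a b c d)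

lemma key1 (x y z u v : V0) :
    (alpha1 E T Q x y z u v + inv2 d2 (alpha4 E T Q x y z u v)).1 =
    (alpha3 E T Q x y z u v + inv2 d2 (alpha2 E T Q x y z u v)).1 := by
  simp only [alpha1, alpha2, alpha3, alpha4, inv2, muc, eta, eps, Jc, br1, br2, comp01, comp02,
    pad2, tt2, t1, t2, one0, one1, Prod.fst_add, Prod.mk_add_mk]

lemma key3 (x y z u v : V0) :
    (alpha1 E T Q x y z u v + inv2 d2 (alpha4 E T Q x y z u v)).2.2 =
    (alpha3 E T Q x y z u v + inv2 d2 (alpha2 E T Q x y z u v)).2.2 +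
      (E.l20 (Q.l4 x y z u) v - E.l20 (Q.l4 x y z v) u + E.l20 (Q.l4 x y u v) z -
        E.l20 (Q.l4 x z u v) y + E.l20 (Q.l4 y z u v) x +
        Q.l4 (E.l00 x y) z u v - Q.l4 (E.l00 x z) y u v + Q.l4 (E.l00 x u) y z v -
        Q.l4 (E.l00 x v) y z u + Q.l4 (E.l00 y z) x u v - Q.l4 (E.l00 y u) x z v +
        Q.l4 (E.l00 y v) x z u + Q.l4 (E.l00 z u) x y v - Q.l4 (E.l00 z v) x y u +
        Q.l4 (E.l00 u v) x y z) := by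
  simp only [alpha1, alpha2, alpha3, alpha4, inv2, muc, eta, eps, Jc, br1, br2, comp01, comp02,
    pad2, tt2, t1, t2, one0, one1, Prod.snd_add, Prod.fst_add, Prod.mk_add_mk,
    map_zero, map_add, map_neg, add_zero, zero_add,
    l01_addr, l01_subr, l01_zeror, l01_negr, l01_zerol, l01_negl,
    l10_zerol, l10_addl, l10_negl, l10_subl,
    l02_zeror, l02_negr, l02_negl, l02_addr, l02_subr, l20_negl, l20_addl, l20_zerol,
    E.chain02, E.chain20, d2_l4 E T Q, E.anti10, E.anti20, neg_neg]
  simp only [l4_4123 E T Q (E.l00 u v) x y z, l4_2134 E T Q (E.l00 y v) x z u,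
    l4_3124 E T Q (E.l00 z v) x y u, l4_2134 E T Q (E.l00 y u) x z v,
    l4_3124 E T Q (E.l00 z u) x y v, l4_2134 E T Q (E.l00 y z) x u v]
  abel

lemma key2 (x y z u v : V0) :
    (alpha1 E T Q x y z u v + inv2 d2 (alpha4 E T Q x y z u v)).2.1 =
    (alpha3 E T Q x y z u v + inv2 d2 (alpha2 E T Q x y z u v)).2.1 := by
  have h1 := T.cond2 x y (T.l3 u v z)
  rw [d1_l3 E T, l3_subl, l3_addl, l3_negl] at h1
  have h2 := T.cond2 x z (T.l3 u v y)
  rw [d1_l3 E T, l3_subl, l3_addl, l3_negl] at h2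
  have h3 := T.cond2 x u (T.l3 v y z)
  rw [d1_l3 E T, l3_subl, l3_addl, l3_negl] at h3
  have h4 := T.cond2 y z (T.l3 u v x)
  rw [d1_l3 E T, l3_subl, l3_addl, l3_negl] at h4
  have h5 := T.cond2 y u (T.l3 v x z)
  rw [d1_l3 E T, l3_subl, l3_addl, l3_negl] at h5
  have h6 := T.cond2 z v (T.l3 u x y)
  rw [d1_l3 E T, l3_subl, l3_addl, l3_negl] at h6
  have h7 := T.cond2 u v (T.l3 x y z)
  rw [d1_l3 E T, l3_subl, l3_addl, l3_negl] at h7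
  refine eq_of_rel7 (nz h1) h2 (nz h3) (nz h4) h5 h6 (nz h7) ?_
  simp only [alpha1, alpha2, alpha3, alpha4, inv2, muc, eta, eps, Jc, br1, br2, comp01,
    comp02, pad2, tt2, t1, t2, one0, one1, Prod.snd_add, Prod.fst_add, Prod.mk_add_mk,
    map_zero, map_add, map_neg, add_zero, zero_add,
    l01_addr, l01_subr, l01_zeror, l01_negr, l01_zerol, l01_negl,
    l10_zerol, l10_addl, l10_negl, l10_subl,
    l02_zeror, l20_negl, l20_addl, l20_zerol,
    E.chain02, E.chain20, d2_l4 E T Q, E.anti10, E.anti20,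
    l3_negl, l3_neg2, l3_neg3, l00_negl, l00_negr, neg_neg,
    E.anti00 (E.l00 x y) z, l3_312 E T u v (E.l00 z (E.l00 x y)),
    l3_312 E T y (E.l00 u v) (E.l00 x z), l3_132 E T x (E.l00 u v) (E.l00 y z),
    l3_321 E T v y (E.l00 x z), l3_231 E T v x (E.l00 y z),
    l3_231 E T v x z, l3_231 E T v y z,
    E.anti00 z v, l3_132 E T x y (E.l00 v z),
    E.anti00 x v, l3_321 E T y z (E.l00 v x),
    E.anti00 y v, l3_312 E T y z (E.l00 v x),
    E.anti00 (E.l00 v x) z, l3_321 E T u y (E.l00 z (E.l00 v x)),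
    l3_231 E T u (E.l00 v x) (E.l00 y z), l3_321 E T u z (E.l00 v x),
    l3_231 E T u y z, l3_132 E T x z (E.l00 v y),
    l3_321 E T u (E.l00 v y) (E.l00 x z), E.anti00 (E.l00 v y) z,
    l3_231 E T u x (E.l00 z (E.l00 v y)), l3_231 E T u x z,
    l3_321 E T u z (E.l00 v y), l3_321 E T u y (E.l00 x (E.l00 v z)),
    l3_231 E T u x (E.l00 y (E.l00 v z)), l3_231 E T u x (E.l00 v z),
    l3_231 E T u y (E.l00 v z), l3_321 E T u y (E.l00 x z),
    l3_231 E T u x (E.l00 y z), E.anti00 x u,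
    l3_321 E T y z (E.l00 u x), E.anti00 y u,
    E.anti00 z u, l3_132 E T x y (E.l00 u z),
    l3_312 E T y z (E.l00 u x), E.anti00 (E.l00 u x) z,
    l3_321 E T v y (E.l00 z (E.l00 u x)), l3_231 E T v (E.l00 u x) (E.l00 y z),
    l3_321 E T v z (E.l00 u x), l3_132 E T x z (E.l00 u y),
    l3_321 E T v (E.l00 u y) (E.l00 x z), E.anti00 (E.l00 u y) z,
    l3_231 E T v x (E.l00 z (E.l00 u y)), l3_321 E T v z (E.l00 u y),
    l3_321 E T v y (E.l00 x (E.l00 u z)), l3_231 E T v x (E.l00 y (E.l00 u z)),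
    l3_231 E T v x (E.l00 u z), l3_231 E T v y (E.l00 u z),
    l3_312 E T u v x, l3_312 E T u v y,
    l3_312 E T u v z, l3_321 E T u z (E.l00 x y),
    l3_231 E T u x y, E.anti00 (E.l00 u x) y,
    l3_321 E T v z (E.l00 y (E.l00 u x)), l3_321 E T v y (E.l00 u x),
    l3_231 E T z (E.l00 u x) (E.l00 v y), E.anti00 (E.l00 u x) v,
    l3_312 E T y z (E.l00 v (E.l00 u x)), l3_213 E T y (E.l00 u x) (E.l00 v z),
    l3_321 E T v z (E.l00 x (E.l00 u y)), l3_231 E T v x (E.l00 u y),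
    E.anti00 (E.l00 u y) v, l3_132 E T x z (E.l00 v (E.l00 u y)),
    l3_321 E T z (E.l00 u y) (E.l00 v x), l3_321 E T v (E.l00 u z) (E.l00 x y),
    l3_231 E T v x y, l3_132 E T x (E.l00 u z) (E.l00 v y),
    l3_312 E T y (E.l00 u z) (E.l00 v x), E.anti00 (E.l00 u z) v,
    E.anti00 (E.l00 x y) u, l3_321 E T v z (E.l00 u (E.l00 x y)),
    l3_312 E T u v (E.l00 x y), l3_321 E T u v (E.l00 x y),
    E.anti00 (E.l00 v z) u, E.anti00 (E.l00 v x) u,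
    l3_312 E T y z (E.l00 u (E.l00 v x)), E.anti00 (E.l00 v y) u,
    l3_132 E T x z (E.l00 u (E.l00 v y)), l3_312 E T y z (E.l00 x (E.l00 u v)),
    l3_132 E T x z (E.l00 y (E.l00 u v)), E.anti00 (E.l00 x z) u,
    l3_321 E T v y (E.l00 u (E.l00 x z)), l3_312 E T u v (E.l00 x z),
    E.anti00 (E.l00 y z) u, l3_231 E T v x (E.l00 u (E.l00 y z)),
    l3_312 E T u v (E.l00 y z), l3_321 E T u v (E.l00 y z),
    l3_321 E T u v (E.l00 x z), E.anti00 (E.l00 x z) y,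
    l3_312 E T u v (E.l00 y (E.l00 x z)), E.anti00 (E.l00 x z) v,
    l3_321 E T u y (E.l00 v (E.l00 x z)), l3_312 E T u v (E.l00 x (E.l00 y z)),
    E.anti00 (E.l00 y z) v, l3_231 E T u x (E.l00 v (E.l00 y z)),
    E.anti00 (E.l00 u v) z, l3_312 E T x y (E.l00 z (E.l00 u v)),
    l3_312 E T x y (E.l00 v (E.l00 u z)), l3_312 E T x y (E.l00 u (E.l00 v z)),
    E.anti00 (E.l00 u v) y, l3_312 E T x z (E.l00 y (E.l00 u v)),
    l3_312 E T x z (E.l00 v (E.l00 u y)), l3_312 E T x z (E.l00 u (E.l00 v y)),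
    l3_321 E T u x (E.l00 z (E.l00 v y)), E.anti00 (E.l00 v z) y,
    l3_321 E T u x (E.l00 y (E.l00 v z)), l3_321 E T u x (E.l00 v (E.l00 y z)),
    E.anti00 (E.l00 u v) x, E.anti00 (E.l00 v z) x,
    E.anti00 (E.l00 u y) x, E.anti00 (E.l00 y z) x]
  abel

end Helpers2
end GV
open GV

/-- With `ℓ₂, ℓ₃, ℓ₄` as in the preceding correspondences and the
associated bracket, Jacobiator and Identiator, the coherence law
`α₁ + α₄⁻¹ = α₃ + α₂⁻¹` holds for all `x,y,z,u,v ∈ V₀` iff the L∞ condition `n = 5`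
holds. -/
theorem coherence_iff_ell5 (K : Type) [Field K]
    (V0 V1 V2 : Type) [AddCommGroup V0] [AddCommGroup V1] [AddCommGroup V2]
    [Module K V0] [Module K V1] [Module K V2]
    (d1 : V1 →ₗ[K] V0) (d2 : V2 →ₗ[K] V1) (hdd : ∀ a, d1 (d2 a) = 0)
    (E : Ell2 K V0 V1 V2 d1 d2) (T : Ell3 E) (Q : Ell4 E T) :
    (∀ x y z u v : V0,
      alpha1 E T Q x y z u v + inv2 d2 (alpha4 E T Q x y z u v) =
        alpha3 E T Q x y z u v + inv2 d2 (alpha2 E T Q x y z u v))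
    ↔
    (∀ x y z u v : V0,
      E.l20 (Q.l4 x y z u) v - E.l20 (Q.l4 x y z v) u + E.l20 (Q.l4 x y u v) z -
        E.l20 (Q.l4 x z u v) y + E.l20 (Q.l4 y z u v) x +
        Q.l4 (E.l00 x y) z u v - Q.l4 (E.l00 x z) y u v + Q.l4 (E.l00 x u) y z v -
        Q.l4 (E.l00 x v) y z u + Q.l4 (E.l00 y z) x u v - Q.l4 (E.l00 y u) x z v +
        Q.l4 (E.l00 y v) x z u + Q.l4 (E.l00 z u) x y v - Q.l4 (E.l00 z v) x y u +
        Q.l4 (E.l00 u v) x y z = 0) := by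
  constructor
  · intro h x y z u v
    have h22 : (alpha1 E T Q x y z u v + inv2 d2 (alpha4 E T Q x y z u v)).2.2 =
        (alpha3 E T Q x y z u v + inv2 d2 (alpha2 E T Q x y z u v)).2.2 := by
      rw [h x y z u v]
    have k3 := key3 E T Q x y z u v
    exact left_eq_add.mp (h22.symm.trans k3)
  · intro h x y z u v
    refine Prod.ext (key1 E T Q x y z u v) (Prod.ext (key2 E T Q x y z u v) ?_)
    rw [key3 E T Q x y z u v, h x y z u v, add_zero]
end

section
/- Let L be the linear category associated with a linear map d : V_1 → V_0 of K-vector spaces. Then the normalized Moore complex of the nerve of L is the 2-term chain complex of L: in degree 0 it is L_0 = V_0; in degree 1 it is ker(d_1) = ker(s) = {0} × V_1 ≅ V_1, with differential ∂ = d_0 = t restricting to d under this identification; and in every degree n ≥ 2 it vanishes: the intersection of the kernels of the face maps d_1, …, d_n on the space of n composable 1-cells is zero. -/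
/- The linear category L associated with a linear map d : V₁ → V₀ has
   L₀ = V₀, L₁ = V₀ × V₁, s(v₀,v₁) = v₀, t(v₀,v₁) = v₀ + d v₁, 1ₓ = (x,0),
   and composition (v₀,v₁) ∘ (v₀ + d v₁, w₁) = (v₀, v₁ + w₁).
   On L ⊠ L' (cells L₀ ⊗ L'₀ and L₁ ⊗ L'₁, source s ⊗ s', target t ⊗ t',
   identities 1 ⊗ 1') the composition is X ∘ Y = X + Y − (1 ⊗ 1')((t ⊗ t')(X)). -/

namespace TwoTerm

open scoped TensorProduct

variable {K : Type} [Field K] {V0 V1 : Type} [AddCommGroup V0] [AddCommGroup V1]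
  [Module K V0] [Module K V1]

/-- Source map `s : L₁ → L₀`. -/
def sMap (K : Type) [Field K] (V0 V1 : Type) [AddCommGroup V0] [AddCommGroup V1]
    [Module K V0] [Module K V1] : (V0 × V1) →ₗ[K] V0 :=
  LinearMap.fst K V0 V1

/-- Target map `t : L₁ → L₀`, `t(v₀,v₁) = v₀ + d v₁`. -/
def tMap (d : V1 →ₗ[K] V0) : (V0 × V1) →ₗ[K] V0 :=
  LinearMap.fst K V0 V1 + d.comp (LinearMap.snd K V0 V1)

/-- Identity map `1 : L₀ → L₁`, `1ₓ = (x,0)`. -/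
def oneMap (K : Type) [Field K] (V0 V1 : Type) [AddCommGroup V0] [AddCommGroup V1]
    [Module K V0] [Module K V1] : V0 →ₗ[K] (V0 × V1) :=
  LinearMap.prod LinearMap.id 0

/-- Composition of composable 1-cells of `L`: `(v₀,v₁) ∘ (v₀ + d v₁, w₁) = (v₀, v₁ + w₁)`. -/
def lcomp (v w : V0 × V1) : V0 × V1 := (v.1, v.2 + w.2)

variable {V'0 V'1 : Type} [AddCommGroup V'0] [AddCommGroup V'1]
  [Module K V'0] [Module K V'1]

/-- Composition on the 1-cells `L₁ ⊗ L'₁` of `L ⊠ L'`: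
`X ∘ Y = X + Y − (1 ⊗ 1')((t ⊗ t')(X))`. -/
noncomputable def bcomp (d : V1 →ₗ[K] V0) (d' : V'1 →ₗ[K] V'0)
    (X Y : (V0 × V1) ⊗[K] (V'0 × V'1)) : (V0 × V1) ⊗[K] (V'0 × V'1) :=
  X + Y -
    TensorProduct.map (oneMap K V0 V1) (oneMap K V'0 V'1)
      (TensorProduct.map (tMap d) (tMap d') X)

end TwoTerm

namespace TwoTerm

variable {K : Type} [Field K] {V0 V1 : Type} [AddCommGroup V0] [AddCommGroup V1]
  [Module K V0] [Module K V1]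

/-- The `k`-th face map (`1 ≤ k ≤ n`) of the nerve of `L`, on strings of `n`
composable 1-cells: `d_n` drops the last cell and `d_k` (`0 < k < n`) composes the
`k`-th and `(k+1)`-st cells. -/
def face (n k : ℕ) (f : Fin n → V0 × V1) : Fin (n - 1) → V0 × V1 :=
  fun j =>
    if (j : ℕ) + 1 < k then f ⟨j.val, by have := j.isLt; omega⟩
    else if (j : ℕ) + 1 = k then
      lcomp (f ⟨j.val, by have := j.isLt; omega⟩) (f ⟨j.val + 1, by have := j.isLt; omega⟩)
    else f ⟨j.val + 1, by have := j.isLt; omega⟩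

end TwoTerm

open TwoTerm

/-- The normalized Moore complex of the nerve of the linear category
`L` associated with `d : V₁ → V₀` is the 2-term chain complex of `L`: in degree 0 it is
`L₀ = V₀`; in degree 1 it is `ker s = {0} × V₁ ≅ V₁` with differential `∂ = d₀ = t`
restricting to `d`; and in every degree `n ≥ 2` it vanishes: the intersection of the
kernels of the face maps `d_1, …, d_n` on the space of `n` composable 1-cells is zero. -/
theorem moore_complex_of_nerve (K : Type) [Field K]
    (V0 V1 : Type) [AddCommGroup V0] [AddCommGroup V1] [Module K V0] [Module K V1]
    (d : V1 →ₗ[K] V0) :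
    -- degree 1: ker(d₁) = ker(s) = {0} × V₁ ≅ V₁, with differential d₀ = t restricting to d
    (∀ f : V0 × V1, sMap K V0 V1 f = 0 ↔ ∃ x : V1, f = (0, x)) ∧
    (∀ x : V1, tMap d (0, x) = d x) ∧
    -- degrees n ≥ 2: the Moore complex vanishes
    (∀ n, 2 ≤ n → ∀ f : Fin n → V0 × V1,
      (∀ i : Fin (n - 1),
          tMap d (f ⟨i.val, by have := i.isLt; omega⟩) =
            sMap K V0 V1 (f ⟨i.val + 1, by have := i.isLt; omega⟩)) →
      (∀ k, 1 ≤ k → k ≤ n → face n k f = 0) →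
      f = 0) := by
  refine ⟨?_, ?_, ?_⟩
  · intro f
    constructor
    · intro h
      exact ⟨f.2, by ext <;> simp_all [sMap]⟩
    · rintro ⟨x, rfl⟩; rfl
  · intro x; simp [tMap]
  · intro n hn f hcomp hface
    have h1 : ∀ i : Fin n, i.val < n - 1 → f i = 0 := by
      intro i hi
      have h := congrFun (hface n (by omega) le_rfl) ⟨i.val, hi⟩
      simp only [face] at h
      rw [if_pos (by omega)] at h
      simpa using h
    funext i
    by_cases hi : i.val < n - 1
    · exact h1 i hi
    · have hiv : i.val = n - 1 := by have := i.isLt; omega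
      have hface' := congrFun (hface (n-1) (by omega) (by omega)) ⟨n-2, by omega⟩
      simp only [face, Fin.val_mk] at hface'
      rw [if_neg (show ¬ (n-2+1 < n-1) by omega), if_pos (show n-2+1 = n-1 by omega)] at hface'
      have hprev : f ⟨n-2, by omega⟩ = 0 := h1 ⟨n-2, by omega⟩ (show n - 2 < n - 1 by omega)
      have h2 : (f ⟨n-2+1, by omega⟩).2 = 0 := by
        have h := congrArg Prod.snd hface'
        simp only [lcomp, hprev] at h
        simpa using h
      have h1' : (f ⟨n-2+1, by omega⟩).1 = 0 := by
        have h := hcomp ⟨n-2, by omega⟩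
        simp only [Fin.val_mk] at h
        rw [hprev] at h
        simp only [tMap, sMap, map_zero, LinearMap.fst_apply] at h
        exact h.symm
      have hie : i = ⟨n-2+1, by omega⟩ := by ext; show i.val = n - 2 + 1; omega
      rw [hie]
      ext
      · exact h1'
      · exact h2
end

section
/- Let L and L' be the linear categories associated with linear maps d : V_1 → V_0 and d' : V'_1 → V'_0, let L ⊠ L' be the linear category with cells L_0 ⊗ L'_0 and L_1 ⊗ L'_1, source s ⊗ s', target t ⊗ t', identities 1 ⊗ 1' and composition X ∘ Y = X + Y − (1 ⊗ 1')((t ⊗ t')(X)), and let ℓ_n : (nerve(L) ⊗ nerve(L'))_n → nerve(L ⊠ L')_n be the linear maps determined by (f_1,…,f_n) ⊗ (f'_1,…,f'_n) ↦ (f_1 ⊗ f'_1, …, f_n ⊗ f'_n). Then for composable triples (u,v,w) in L and (u',v',w') in L': ℓ_2((d_2 ⊗ d_2)((u,v,w) ⊗ (u',v',w'))) = (u ⊗ u', (v ∘ w) ⊗ (v' ∘ w')) while d_2(ℓ_3((u,v,w) ⊗ (u',v',w'))) = (u ⊗ u', (v ⊗ v') ∘ (w ⊗ w')); moreover, if V_1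 ≠ 0 and V'_1 ≠ 0 there exist composable triples for which these two elements differ, so the family (ℓ_n) does not commute with the face maps and hence is not a simplicial map. -/
namespace TwoTerm

open scoped TensorProduct

variable {K : Type} [Field K] {V0 V1 V'0 V'1 : Type}
  [AddCommGroup V0] [AddCommGroup V1] [AddCommGroup V'0] [AddCommGroup V'1]
  [Module K V0] [Module K V1] [Module K V'0] [Module K V'1]

/-- The face map `d₂` of the nerve of `L` on strings of 3 composable 1-cells:
`d₂ (u,v,w) = (u, v ∘ w)`. -/
def dtwo (x : (V0 × V1) × (V0 × V1) × (V0 × V1)) : (V0 × V1) × (V0 × V1) :=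
  (x.1, lcomp x.2.1 x.2.2)

/-- The value of `ℓ₂ : (nerve L ⊗ nerve L')₂ → nerve (L ⊠ L')₂` on a pure tensor of
2-strings: `(f₁,f₂) ⊗ (f'₁,f'₂) ↦ (f₁ ⊗ f'₁, f₂ ⊗ f'₂)`. -/
noncomputable def elltwo (p : (V0 × V1) × (V0 × V1)) (p' : (V'0 × V'1) × (V'0 × V'1)) :
    ((V0 × V1) ⊗[K] (V'0 × V'1)) × ((V0 × V1) ⊗[K] (V'0 × V'1)) :=
  (p.1 ⊗ₜ[K] p'.1, p.2 ⊗ₜ[K] p'.2)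

/-- The value of `ℓ₃` on a pure tensor of 3-strings. -/
noncomputable def ellthree (x : (V0 × V1) × (V0 × V1) × (V0 × V1))
    (x' : (V'0 × V'1) × (V'0 × V'1) × (V'0 × V'1)) :
    ((V0 × V1) ⊗[K] (V'0 × V'1)) × ((V0 × V1) ⊗[K] (V'0 × V'1)) ×
      ((V0 × V1) ⊗[K] (V'0 × V'1)) :=
  (x.1 ⊗ₜ[K] x'.1, x.2.1 ⊗ₜ[K] x'.2.1, x.2.2 ⊗ₜ[K] x'.2.2)

/-- The face map `d₂` of the nerve of `L ⊠ L'` on strings of 3 composable 1-cells. -/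
noncomputable def dtwoBox (d : V1 →ₗ[K] V0) (d' : V'1 →ₗ[K] V'0)
    (X : ((V0 × V1) ⊗[K] (V'0 × V'1)) × ((V0 × V1) ⊗[K] (V'0 × V'1)) ×
      ((V0 × V1) ⊗[K] (V'0 × V'1))) :
    ((V0 × V1) ⊗[K] (V'0 × V'1)) × ((V0 × V1) ⊗[K] (V'0 × V'1)) :=
  (X.1, bcomp d d' X.2.1 X.2.2)

end TwoTerm

open TwoTerm
open scoped TensorProduct

/-- For composable triples `(u,v,w)` in `L` and `(u',v',w')` in `L'`,
`ℓ₂ ((d₂ ⊗ d₂)((u,v,w) ⊗ (u',v',w'))) = (u ⊗ u', (v ∘ w) ⊗ (v' ∘ w'))` while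
`d₂ (ℓ₃ ((u,v,w) ⊗ (u',v',w'))) = (u ⊗ u', (v ⊗ v') ∘ (w ⊗ w'))`; moreover, if
`V₁ ≠ 0` and `V'₁ ≠ 0` there exist composable triples for which these two elements
differ, so the family `(ℓₙ)` does not commute with the face maps and hence is not a
simplicial map. -/
theorem ell_not_simplicial (K : Type) [Field K]
    (V0 V1 V'0 V'1 : Type) [AddCommGroup V0] [AddCommGroup V1]
    [AddCommGroup V'0] [AddCommGroup V'1]
    [Module K V0] [Module K V1] [Module K V'0] [Module K V'1]
    (d : V1 →ₗ[K] V0) (d' : V'1 →ₗ[K] V'0) :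
    (∀ (u v w : V0 × V1) (u' v' w' : V'0 × V'1),
      tMap d u = sMap K V0 V1 v → tMap d v = sMap K V0 V1 w →
      tMap d' u' = sMap K V'0 V'1 v' → tMap d' v' = sMap K V'0 V'1 w' →
      elltwo (K := K) (dtwo (u, v, w)) (dtwo (u', v', w')) =
          (u ⊗ₜ[K] u', lcomp v w ⊗ₜ[K] lcomp v' w') ∧
        dtwoBox d d' (ellthree (u, v, w) (u', v', w')) =
          (u ⊗ₜ[K] u', bcomp d d' (v ⊗ₜ[K] v') (w ⊗ₜ[K] w'))) ∧
    (Nontrivial V1 → Nontrivial V'1 →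
      ∃ (u v w : V0 × V1) (u' v' w' : V'0 × V'1),
        tMap d u = sMap K V0 V1 v ∧ tMap d v = sMap K V0 V1 w ∧
        tMap d' u' = sMap K V'0 V'1 v' ∧ tMap d' v' = sMap K V'0 V'1 w' ∧
        elltwo (K := K) (dtwo (u, v, w)) (dtwo (u', v', w')) ≠
          dtwoBox d d' (ellthree (u, v, w) (u', v', w'))) := by
  constructor
  · intro u v w u' v' w' _ _ _ _
    exact ⟨rfl, rfl⟩
  · intro h1 h2
    obtain ⟨a, ha⟩ := exists_ne (0 : V1)
    obtain ⟨a', ha'⟩ := exists_ne (0 : V'1)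
    obtain ⟨φ, hφ⟩ : ∃ φ : Module.Dual K V1, φ a ≠ 0 := by
      by_contra hc
      push_neg at hc
      exact ha ((Module.forall_dual_apply_eq_zero_iff K a).mp hc)
    obtain ⟨φ', hφ'⟩ : ∃ φ' : Module.Dual K V'1, φ' a' ≠ 0 := by
      by_contra hc
      push_neg at hc
      exact ha' ((Module.forall_dual_apply_eq_zero_iff K a').mp hc)
    refine ⟨(0, 0), (0, a), (d a, 0), (0, 0), (0, a'), (d' a', a'), ?_, ?_, ?_, ?_, ?_⟩
    · simp [tMap, sMap]
    · simp [tMap, sMap]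
    · simp [tMap, sMap]
    · simp [tMap, sMap]
    · intro hEq
      have h2nd := congrArg Prod.snd hEq
      set F : ((V0 × V1) ⊗[K] (V'0 × V'1)) →ₗ[K] K :=
        (TensorProduct.lid K K).toLinearMap ∘ₗ
          TensorProduct.map (φ ∘ₗ LinearMap.snd K V0 V1) (φ' ∘ₗ LinearMap.snd K V'0 V'1)
        with hF
      have hFE := congrArg F h2nd
      have hL : F ((elltwo (K := K) (dtwo ((0,0), (0,a), (d a, 0)))
          (dtwo ((0,0), (0,a'), (d' a', a')))).2) = φ a * (φ' a' + φ' a') := by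
        simp [elltwo, dtwo, lcomp, hF, map_add, mul_add]
      have hR : F ((dtwoBox d d' (ellthree ((0,0), (0,a), (d a, 0))
          ((0,0), (0,a'), (d' a', a')))).2) = φ a * φ' a' := by
        simp [dtwoBox, ellthree, bcomp, hF, tMap, oneMap, TensorProduct.map_tmul]
      rw [hL, hR] at hFE
      have : φ a * φ' a' = 0 := by linear_combination hFE
      exact (mul_ne_zero hφ hφ') this
end
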